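/- Let w be a word of length n over an alphabet Σ, let f : Σ → Σ be an involution and φ the induced antimorphic involution on words, and let £ ∈ Σ be a letter such that neither £ nor f(£) occurs in w. Set w̄ = w · £ · φ(w), a word of length 2n+1. Then for every i with 1 ≤ i ≤ n−1, the length of the longest common prefix of the suffixes w̄[i+1..2n+1] and w̄[2n−i+2..2n+1] equals cmp_w[i]. -/

import Mathlib

open List

/-- `x^k`: concatenation of `k` copies of the word `x`. -/
def listPow {α : Type*} (x : List α) (k : ℕ) : List α := (List.replicate k x).flatten

/-- Minimal period `mp_s^k(u)` taking values in `ℕ∞`: the least `m > s` such that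
the prefix of `u` of length `k*m` is the `k`-th power of the prefix of length `m`;
`⊤` if no such `m` exists. -/
noncomputable def minPeriod {α : Type*} (k s : ℕ) (u : List α) : ℕ∞ :=
  sInf {N : ℕ∞ | ∃ m : ℕ, N = (m : ℕ∞) ∧ s < m ∧ k * m ≤ u.length ∧
    listPow (u.take m) k <+: u}

/-- Length of the longest common prefix of two words. -/
def lcpLen {α : Type*} [DecidableEq α] (a b : List α) : ℕ :=
  ((a.zip b).takeWhile fun p => decide (p.1 = p.2)).length

/-- The antimorphic involution on words induced by a letter map `f`. -/
def phi {α : Type*} (f : α → α) (u : List α) : List α := (u.map f).reverse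

/-- Centralized maximal pseudo-palindrome array entry `cmp_w[i]`. -/
noncomputable def cmpArr {α : Type*} (f : α → α) (w : List α) (i : ℕ) : ℕ :=
  sSup {m : ℕ | m ≤ min i (w.length - i) ∧
    phi f ((w.drop (i - m)).take m) = (w.drop i).take m}

section Aux
variable {α : Type*} [DecidableEq α]

lemma lcpLen_cons (x y : α) (a b : List α) :
    lcpLen (x::a) (y::b) = if x = y then lcpLen a b + 1 else 0 := by
  by_cases h : x = y <;> simp [lcpLen, List.takeWhile_cons, h]

lemma take_lcpLen (a b : List α) : a.take (lcpLen a b) = b.take (lcpLen a b) := by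
  induction a generalizing b with
  | nil => simp [lcpLen]
  | cons x a ih =>
    cases b with
    | nil => simp [lcpLen]
    | cons y b =>
      by_cases h : x = y <;> simp [lcpLen_cons, h, ih]

lemma lcpLen_le_right (a b : List α) : lcpLen a b ≤ b.length := by
  have := (List.takeWhile_sublist (fun p => decide (p.1 = p.2)) (l := a.zip b)).length_le
  simp [lcpLen, List.length_zip] at *
  omega

lemma lcpLen_le_left (a b : List α) : lcpLen a b ≤ a.length := by
  have := (List.takeWhile_sublist (fun p => decide (p.1 = p.2)) (l := a.zip b)).length_le
  simp [lcpLen, List.length_zip] at *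
  omega

lemma le_lcpLen {a b : List α} {m : ℕ} (hma : m ≤ a.length) (hmb : m ≤ b.length)
    (h : a.take m = b.take m) : m ≤ lcpLen a b := by
  induction m generalizing a b with
  | zero => exact Nat.zero_le _
  | succ m ih =>
    cases a with
    | nil => simp at hma
    | cons x a =>
      cases b with
      | nil => simp at hmb
      | cons y b =>
        simp only [List.take_succ_cons, List.cons.injEq] at h
        simp only [List.length_cons, Nat.succ_le_succ_iff] at hma hmb
        rw [lcpLen_cons, if_pos h.1]
        exact Nat.succ_le_succ (ih hma hmb h.2)

end Aux

/-- for `w̄ = w·£·φ(w)` with `£` and `f(£)` not occurring in `w`,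
the longest common prefix of `w̄[i+1..2n+1]` and `w̄[2n−i+2..2n+1]` has length
`cmp_w[i]`, for `1 ≤ i ≤ n−1`. -/
theorem stmt8 {α : Type*} [DecidableEq α] (f : α → α) (hf : Function.Involutive f)
    (w : List α) (L : α) (hL : L ∉ w) (hfL : f L ∉ w) :
    ∀ i, 1 ≤ i → i ≤ w.length - 1 →
      lcpLen ((w ++ L :: phi f w).drop i)
          ((w ++ L :: phi f w).drop (2 * w.length - i + 1)) = cmpArr f w i := by
  intro i hi1 hi2
  set n := w.length with hn
  have hin : i < n := by omega
  set A := (w ++ L :: phi f w).drop i with hAdef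
  set B := (w ++ L :: phi f w).drop (2 * n - i + 1) with hBdef
  have hA : A = w.drop i ++ L :: phi f w := by
    rw [hAdef, List.drop_append_of_le_length (by omega)]
  have hlenphi : (phi f w).length = n := by simp [phi, hn]
  have hB : B = phi f (w.take i) := by
    have e1 : w ++ L :: phi f w = (w ++ [L]) ++ phi f w := by simp
    have e2 : 2 * n - i + 1 = (w ++ [L]).length + (n - i) := by simp; omega
    rw [hBdef, e1, e2, List.drop_length_add_append]
    show (w.map f).reverse.drop (n - i) = phi f (w.take i)
    rw [List.drop_reverse]
    have e3 : (w.map f).length - (n - i) = i := by simp [← hn]; omega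
    rw [e3, ← List.map_take]
    rfl
  have hBlen : B.length = i := by
    rw [hB]; simp [phi]; omega
  have hAlen : A.length = 2 * n + 1 - i := by
    rw [hA]; simp [hlenphi]; omega
  have hdroplen : (w.drop i).length = n - i := by simp [hn]
  -- taking ≤ n - i of A stays in w.drop i
  have e1 : ∀ m, m ≤ n - i → A.take m = (w.drop i).take m := by
    intro m hm
    rw [hA, List.take_append_of_le_length (by omega)]
  -- taking ≤ i of B is the pseudo-palindromic mirror
  have e2 : ∀ m, m ≤ i → B.take m = phi f ((w.drop (i - m)).take m) := by
    intro m hm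
    rw [hB]
    show ((w.take i).map f).reverse.take m = _
    rw [List.take_reverse]
    have e3 : ((w.take i).map f).length - m = i - m := by simp; omega
    rw [e3, ← List.map_drop, List.drop_take]
    have : i - (i - m) = m := by omega
    rw [this]
    rfl
  -- any common prefix has length ≤ n - i
  have hstop : ∀ m, A.take m = B.take m → m ≤ n - i := by
    intro m hm
    by_contra hcon
    push_neg at hcon
    have h1 : A.take (n - i + 1) = w.drop i ++ [L] := by
      rw [hA]
      have : n - i + 1 = (w.drop i).length + 1 := by omega
      rw [this, List.take_append]
      simp
    have h2 : A.take (n - i + 1) = B.take (n - i + 1) := by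
      have := congrArg (List.take (n - i + 1)) hm
      rwa [List.take_take, List.take_take, Nat.min_eq_left (by omega)] at this
    have hLB : L ∈ B := by
      have : L ∈ B.take (n - i + 1) := by
        rw [← h2, h1]; simp
      exact List.mem_of_mem_take this
    rw [hB] at hLB
    simp only [phi, List.mem_reverse, List.mem_map] at hLB
    obtain ⟨a, ha, hfa⟩ := hLB
    have : f L = a := by rw [← hfa, hf]
    exact hfL (this ▸ List.mem_of_mem_take ha)
  -- now compute
  set Lv := lcpLen A B with hLv
  have htk := take_lcpLen A B
  have hL1 : Lv ≤ i := (lcpLen_le_right A B).trans_eq hBlen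
  have hL2 : Lv ≤ n - i := hstop Lv htk
  have hLS : Lv ∈ {m : ℕ | m ≤ min i (n - i) ∧
      phi f ((w.drop (i - m)).take m) = (w.drop i).take m} := by
    refine ⟨le_min hL1 hL2, ?_⟩
    rw [← e2 Lv hL1, ← e1 Lv hL2, htk]
  have hub : ∀ m ∈ {m : ℕ | m ≤ min i (n - i) ∧
      phi f ((w.drop (i - m)).take m) = (w.drop i).take m}, m ≤ Lv := by
    rintro m ⟨hm, heq⟩
    have hmi : m ≤ i := le_trans hm (min_le_left _ _)
    have hmni : m ≤ n - i := le_trans hm (min_le_right _ _)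
    apply le_lcpLen (by omega) (by omega)
    rw [e1 m hmni, e2 m hmi, heq]
  show Lv = cmpArr f w i
  rw [cmpArr]
  exact le_antisymm (le_csSup ⟨min i (n - i), fun m hm => hm.1⟩ hLS) (csSup_le ⟨Lv, hLS⟩ hub)
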